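/- Let B be a Boolean algebra, n ≥ 3 a natural number, and U ⊆ B. Then U is an ultrafilter if and only if: for every family x₀, …, x_{n−1} ∈ B with x₀ ∨ ⋯ ∨ x_{n−1} = ⊤ and xᵢ ∧ xⱼ = ⊥ for all i < j, there is exactly one i with xᵢ ∈ U. -/

import Mathlib

/-- An ultrafilter in a Boolean algebra `B`: a subset containing `⊤`, not containing `⊥`,
closed under binary meets, upward closed, and containing `x` or `xᶜ` for every `x`. -/
def IsBooleanUltrafilter {B : Type*} [BooleanAlgebra B] (U : Set B) : Prop :=
  ⊤ ∈ U ∧ ⊥ ∉ U ∧ (∀ x ∈ U, ∀ y ∈ U, x ⊓ y ∈ U) ∧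
    (∀ x ∈ U, ∀ y, x ≤ y → y ∈ U) ∧ ∀ x : B, x ∈ U ∨ xᶜ ∈ U

private lemma bool_aux1 {B : Type*} [BooleanAlgebra B] (a b : B) : a ⊓ (aᶜ ⊓ b) = ⊥ := by
  rw [← inf_assoc, inf_compl_eq_bot, bot_inf_eq]

private lemma bool_aux2 {B : Type*} [BooleanAlgebra B] (a b : B) : a ⊓ (b ⊓ aᶜ) = ⊥ := by
  rw [inf_left_comm, inf_compl_eq_bot, inf_bot_eq]

private lemma triple_aux {B : Type*} [BooleanAlgebra B] {n : ℕ} (hn : 3 ≤ n) {U : Set B}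
    (H : ∀ x : Fin n → B, (Finset.univ.sup x = ⊤) →
        (∀ i j : Fin n, i < j → x i ⊓ x j = ⊥) → ∃! i : Fin n, x i ∈ U)
    (hbot : ⊥ ∉ U) (a b c : B) (hsup : a ⊔ b ⊔ c = ⊤)
    (hab : a ⊓ b = ⊥) (hac : a ⊓ c = ⊥) (hbc : b ⊓ c = ⊥) :
    (a ∈ U ∧ b ∉ U ∧ c ∉ U) ∨ (b ∈ U ∧ a ∉ U ∧ c ∉ U) ∨ (c ∈ U ∧ a ∉ U ∧ b ∉ U) := by
  set x : Fin n → B := fun i =>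
    if i.val = 0 then a else if i.val = 1 then b else if i.val = 2 then c else ⊥ with hx
  set i0 : Fin n := ⟨0, by omega⟩ with hi0
  set i1 : Fin n := ⟨1, by omega⟩ with hi1
  set i2 : Fin n := ⟨2, by omega⟩ with hi2
  have hx0 : x i0 = a := by simp [hx, hi0]
  have hx1 : x i1 = b := by simp [hx, hi1]
  have hx2 : x i2 = c := by simp [hx, hi2]
  have hsup' : Finset.univ.sup x = ⊤ := by
    apply le_antisymm le_top
    rw [← hsup]
    refine sup_le (sup_le ?_ ?_) ?_
    · rw [← hx0]; exact Finset.le_sup (Finset.mem_univ i0)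
    · rw [← hx1]; exact Finset.le_sup (Finset.mem_univ i1)
    · rw [← hx2]; exact Finset.le_sup (Finset.mem_univ i2)
  have hdisj : ∀ i j : Fin n, i < j → x i ⊓ x j = ⊥ := by
    intro i j hij
    have hij' : (i : ℕ) < (j : ℕ) := hij
    simp only [hx]
    split_ifs <;> first | assumption | omega | simp
  obtain ⟨i, hi, huniq⟩ := H x hsup' hdisj
  by_cases h0 : i = i0
  · subst h0
    rw [hx0] at hi
    refine Or.inl ⟨hi, fun hb => ?_, fun hc => ?_⟩
    · have := huniq i1 (show x i1 ∈ U by rw [hx1]; exact hb)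
      simp [hi1, hi0, Fin.ext_iff] at this
    · have := huniq i2 (show x i2 ∈ U by rw [hx2]; exact hc)
      simp [hi2, hi0, Fin.ext_iff] at this
  · by_cases h1 : i = i1
    · subst h1
      rw [hx1] at hi
      refine Or.inr (Or.inl ⟨hi, fun ha => ?_, fun hc => ?_⟩)
      · have := huniq i0 (show x i0 ∈ U by rw [hx0]; exact ha)
        simp [hi1, hi0, Fin.ext_iff] at this
      · have := huniq i2 (show x i2 ∈ U by rw [hx2]; exact hc)
        simp [hi2, hi1, Fin.ext_iff] at this
    · by_cases h2 : i = i2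
      · subst h2
        rw [hx2] at hi
        refine Or.inr (Or.inr ⟨hi, fun ha => ?_, fun hb => ?_⟩)
        · have := huniq i0 (show x i0 ∈ U by rw [hx0]; exact ha)
          simp [hi2, hi0, Fin.ext_iff] at this
        · have := huniq i1 (show x i1 ∈ U by rw [hx1]; exact hb)
          simp [hi2, hi1, Fin.ext_iff] at this
      · exfalso
        have h0' : (i : ℕ) ≠ 0 := fun h => h0 (Fin.ext (by simp [hi0, h]))
        have h1' : (i : ℕ) ≠ 1 := fun h => h1 (Fin.ext (by simp [hi1, h]))
        have h2' : (i : ℕ) ≠ 2 := fun h => h2 (Fin.ext (by simp [hi2, h]))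
        have : x i = ⊥ := by simp [hx, h0', h1', h2']
        rw [this] at hi
        exact hbot hi

/-- For `n ≥ 3`, `U` is an ultrafilter iff for every family
`x₀, …, x_{n-1}` with `x₀ ⊔ ⋯ ⊔ x_{n-1} = ⊤` and `xᵢ ⊓ xⱼ = ⊥` for `i < j`,
exactly one `xᵢ` belongs to `U`. -/
theorem isBooleanUltrafilter_iff_finite_partition {B : Type*} [BooleanAlgebra B]
    (n : ℕ) (hn : 3 ≤ n) (U : Set B) :
    IsBooleanUltrafilter U ↔
      ∀ x : Fin n → B, (Finset.univ.sup x = ⊤) →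
        (∀ i j : Fin n, i < j → x i ⊓ x j = ⊥) →
        ∃! i : Fin n, x i ∈ U := by
  constructor
  · rintro ⟨htop, hbot, hmeet, hup, hcompl⟩ x hsup hdisj
    have hex : ∃ i, x i ∈ U := by
      by_contra h
      push_neg at h
      have key : ∀ s : Finset (Fin n), (s.sup x)ᶜ ∈ U := by
        intro s
        induction s using Finset.induction with
        | empty => simpa using htop
        | insert _ _ hni ih =>
          rw [Finset.sup_insert, compl_sup]
          exact hmeet _ ((hcompl _).resolve_left (h _)) _ ih
      have := key Finset.univ
      rw [hsup, compl_top] at this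
      exact hbot this
    obtain ⟨i, hi⟩ := hex
    refine ⟨i, hi, fun j hj => ?_⟩
    by_contra hne
    rcases lt_or_gt_of_ne hne with hlt | hlt
    · exact hbot ((hdisj j i hlt) ▸ hmeet _ hj _ hi)
    · exact hbot ((hdisj i j hlt) ▸ hmeet _ hi _ hj)
  · intro H
    -- First: ⊥ ∉ U
    have hbot : ⊥ ∉ U := by
      intro hb
      set x : Fin n → B := fun i => if i.val = 0 then ⊤ else ⊥ with hx
      have hsup' : Finset.univ.sup x = ⊤ := by
        apply le_antisymm le_top
        have : x ⟨0, by omega⟩ = ⊤ := by simp [hx]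
        rw [← this]
        exact Finset.le_sup (Finset.mem_univ _)
      have hdisj : ∀ i j : Fin n, i < j → x i ⊓ x j = ⊥ := by
        intro i j hij
        have hij' : (i : ℕ) < (j : ℕ) := hij
        simp only [hx]
        split_ifs <;> first | omega | simp
      obtain ⟨i, hi, huniq⟩ := H x hsup' hdisj
      have e1 := huniq ⟨1, by omega⟩ (show x ⟨1, by omega⟩ ∈ U by simpa [hx] using hb)
      have e2 := huniq ⟨2, by omega⟩ (show x ⟨2, by omega⟩ ∈ U by simpa [hx] using hb)
      rw [← e2] at e1
      simp [Fin.ext_iff] at e1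
    have T := triple_aux hn H hbot
    -- ⊤ ∈ U
    have htop : ⊤ ∈ U := by
      rcases T ⊤ ⊥ ⊥ (by simp) (by simp) (by simp) (by simp) with h | h | h
      · exact h.1
      · exact absurd h.1 hbot
      · exact absurd h.1 hbot
    -- complement property
    have hcompl : ∀ y : B, y ∈ U ∨ yᶜ ∈ U := by
      intro y
      rcases T y yᶜ ⊥ (by simp) (by simp) (by simp) (by simp) with h | h | h
      · exact Or.inl h.1
      · exact Or.inr h.1
      · exact absurd h.1 hbot
    -- not both y and yᶜ
    have hnotboth : ∀ y : B, y ∈ U → yᶜ ∉ U := by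
      intro y hy
      rcases T y yᶜ ⊥ (by simp) (by simp) (by simp) (by simp) with h | h | h
      · exact h.2.1
      · exact absurd hy h.2.1
      · exact absurd h.1 hbot
    refine ⟨htop, hbot, ?_, ?_, hcompl⟩
    · -- closed under meets
      intro y hy z hz
      have hyc : yᶜ ∉ U := hnotboth y hy
      have hyzc : y ⊓ zᶜ ∉ U := by
        rcases T z (y ⊓ zᶜ) (yᶜ ⊓ zᶜ)
          (by rw [sup_assoc, ← inf_sup_right, sup_compl_eq_top, top_inf_eq, sup_compl_eq_top])
          (by simp [inf_comm, inf_left_comm, inf_assoc, bool_aux1, bool_aux2])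
          (by simp [inf_comm, inf_left_comm, inf_assoc, bool_aux1, bool_aux2])
          (by simp [inf_comm, inf_left_comm, inf_assoc, bool_aux1, bool_aux2])
          with h | h | h
        · exact h.2.1
        · exact absurd hz h.2.1
        · exact absurd hz h.2.1
      rcases T (y ⊓ z) (y ⊓ zᶜ) yᶜ
        (by rw [← inf_sup_left, sup_compl_eq_top, inf_top_eq, sup_compl_eq_top])
        (by simp [inf_comm, inf_left_comm, inf_assoc, bool_aux1, bool_aux2])
        (by simp [inf_comm, inf_left_comm, inf_assoc, bool_aux1, bool_aux2])
        (by simp [inf_comm, inf_left_comm, inf_assoc, bool_aux1, bool_aux2])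
        with h | h | h
      · exact h.1
      · exact absurd h.1 hyzc
      · exact absurd h.1 hyc
    · -- upward closed
      intro y hy z hyz
      have hzc : zᶜ ∉ U := by
        rcases T y (z ⊓ yᶜ) zᶜ
          (by rw [sup_inf_left, sup_compl_eq_top, inf_top_eq, sup_of_le_right hyz,
                sup_compl_eq_top])
          (by simp [inf_comm, inf_left_comm, inf_assoc, bool_aux1, bool_aux2])
          (by rw [← le_bot_iff]
              calc y ⊓ zᶜ ≤ z ⊓ zᶜ := inf_le_inf_right _ hyz
              _ = ⊥ := inf_compl_eq_bot)
          (by simp [inf_comm, inf_left_comm, inf_assoc, bool_aux1, bool_aux2])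
          with h | h | h
        · exact h.2.2
        · exact absurd hy h.2.1
        · exact absurd hy h.2.1
      rcases hcompl z with h | h
      · exact h
      · exact absurd h hzc
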